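/- Let X be a Banach space, k ≥ 1, and let u : ℝ → X be (k+1)-times continuously differentiable on an interval [t − kτ, t] with τ > 0. Then the BDF defect d := (1/τ) Σ_{j=0}^k δ_j u(t − jτ) − u'(t) admits the exact representation d = (1/k!) [ (1/τ) Σ_{j=0}^k δ_j ∫_{t−kτ}^{t−jτ} (t − jτ − s)^k u^{(k+1)}(s) ds − k ∫_{t−kτ}^{t} (t − s)^{k−1} u^{(k+1)}(s) ds ], where the integrals are X-valued Bochner integrals. -/

import Mathlib

open Set

section BDFAuxiliary

open Finset MeasureTheory intervalIntegral

-- L1: iterated fwdDiff kills low-degree monomials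
lemma fwdDiff_iter_pow_eq_zero (h : ℝ) : ∀ d n : ℕ, d < n →
    (fwdDiff h)^[n] (fun x : ℝ => x ^ d) = 0 := by
  intro d
  induction d using Nat.strong_induction_on with
  | _ d IH =>
    intro n hdn
    obtain ⟨n', rfl⟩ : ∃ n', n = n' + 1 := ⟨n - 1, by omega⟩
    rw [Function.iterate_succ_apply]
    have hΔ : (fwdDiff h) (fun x : ℝ => x ^ d)
        = ∑ i ∈ range d, fun x : ℝ => (d.choose i * h ^ (d - i)) * x ^ i := by
      funext x
      simp only [fwdDiff, Finset.sum_apply]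
      rw [add_pow]
      rw [Finset.sum_range_succ]
      simp [Finset.mul_sum]
      ring_nf
    rw [hΔ, fwdDiff_iter_finset_sum]
    funext x
    simp only [Finset.sum_apply, Pi.zero_apply]
    refine Finset.sum_eq_zero fun i hi => ?_
    have : (fwdDiff h)^[n'] (fun x : ℝ => (↑(d.choose i) * h ^ (d - i)) * x ^ i)
        = (↑(d.choose i) * h ^ (d-i) : ℝ) • (fwdDiff h)^[n'] (fun x : ℝ => x ^ i) := by
      rw [← fwdDiff_iter_const_smul]
      rfl
    rw [this, IH i (Finset.mem_range.mp hi) n' (by have := Finset.mem_range.mp hi; omega)]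
    simp

-- L2: telescoping sum of alternating iterated differences
lemma telescope_fwdDiff (τ : ℝ) (g : ℝ → ℝ) (k : ℕ)
    (hg : (fwdDiff (-τ))^[k] g = 0) (y : ℝ) :
    ∑ q ∈ range k, (-1 : ℝ) ^ q * ((fwdDiff (-τ))^[q] g) (y - τ) = g y := by
  have key : ∀ q, (-1 : ℝ) ^ q * ((fwdDiff (-τ))^[q] g) (y - τ)
      = (-1:ℝ)^q * ((fwdDiff (-τ))^[q] g) y - (-1:ℝ)^(q+1) * ((fwdDiff (-τ))^[q+1] g) y := by
    intro q
    have h1 : ((fwdDiff (-τ))^[q+1] g) y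
        = ((fwdDiff (-τ))^[q] g) (y - τ) - ((fwdDiff (-τ))^[q] g) y := by
      rw [Function.iterate_succ_apply']
      show ((fwdDiff (-τ))^[q] g) (y + -τ) - _ = _
      rw [sub_eq_sub_iff_sub_eq_sub]
      ring_nf
    rw [h1]; ring
  rw [Finset.sum_congr rfl fun q _ => key q, Finset.sum_range_sub']
  simp [hg]

-- composition: Δ_1 of x ↦ G (y - τ x) corresponds to Δ_{-τ} of G
lemma fwdDiff_comp_affine (τ y : ℝ) : ∀ (p : ℕ) (G : ℝ → ℝ),
    (fwdDiff (1:ℝ))^[p] (fun x => G (y - τ * x)) = fun x => ((fwdDiff (-τ))^[p] G) (y - τ * x) := by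
  intro p
  induction p with
  | zero => intro G; simp
  | succ p IH =>
    intro G
    rw [Function.iterate_succ_apply]
    have : fwdDiff (1:ℝ) (fun x => G (y - τ * x)) = fun x => (fwdDiff (-τ) G) (y - τ * x) := by
      funext x
      show G (y - τ * (x + 1)) - G (y - τ * x) = G (y - τ * x + -τ) - G (y - τ * x)
      ring_nf
    rw [this, IH (fwdDiff (-τ) G), Function.iterate_succ_apply]

-- explicit formula for iterated differences of a power function
lemma fwdDiff_iter_pow_apply (τ : ℝ) (m p : ℕ) (y : ℝ) :
    ((fwdDiff (-τ))^[p] (fun z : ℝ => z ^ m)) y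
      = ∑ i ∈ range (p + 1), ((-1:ℝ) ^ (p - i) * (p.choose i)) * (y - i * τ) ^ m := by
  rw [fwdDiff_iter_eq_sum_shift]
  refine Finset.sum_congr rfl fun i _ => ?_
  have : y + i • (-τ) = y - i * τ := by
    rw [nsmul_eq_mul]; ring
  rw [this, zsmul_eq_mul]
  push_cast
  ring

lemma alt_sum_choose_pow (p : ℕ) (hp : 1 ≤ p) :
    ∑ i ∈ range (p + 1), (-1:ℝ) ^ (p - i) * (p.choose i) = 0 := by
  have h1 : ∀ i ∈ range (p + 1), (-1:ℝ) ^ (p - i) * (p.choose i)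
      = (-1:ℝ)^p * ((-1:ℝ)^i * (p.choose i)) := by
    intro i hi
    have hip : i ≤ p := by simpa [Nat.lt_succ_iff] using Finset.mem_range.mp hi
    have hthis : (-1:ℝ) ^ (p - i) * (-1:ℝ)^i = (-1:ℝ)^p := by
      rw [← pow_add, Nat.sub_add_cancel hip]
    have hsq : (-1:ℝ)^i * (-1:ℝ)^i = 1 := by
      rw [← pow_add]; exact Even.neg_one_pow ⟨i, rfl⟩
    linear_combination ((p.choose i : ℝ) * (-1:ℝ)^i) * hthis
      + (-(p.choose i : ℝ) * (-1:ℝ)^(p-i)) * hsq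
  rw [Finset.sum_congr rfl h1, ← Finset.mul_sum]
  have := Int.alternating_sum_range_choose_of_ne (n := p) (by omega)
  have h2 : ∑ i ∈ range (p + 1), (-1:ℝ)^i * (p.choose i) = 0 := by
    exact_mod_cast congrArg (Int.cast : ℤ → ℝ) this
  rw [h2, mul_zero]

/-- Core identity. -/
lemma core_identity (k m : ℕ) (hm1 : 1 ≤ m) (hmk : m ≤ k) (y τ : ℝ) :
    ∑ p ∈ Finset.Icc 1 k, ((-1:ℝ) ^ p / p) * ((fwdDiff (-τ))^[p] (fun z : ℝ => z ^ m)) y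
      = m * τ * y ^ (m - 1) := by
  set F : ℝ → ℝ := fun σ => ∑ p ∈ Finset.Icc 1 k, ((-1:ℝ) ^ p / p) *
      ∑ i ∈ range (p + 1), ((-1:ℝ) ^ (p - i) * (p.choose i)) * (y - i * σ) ^ m with hF
  have hFeq : ∀ σ, F σ = ∑ p ∈ Finset.Icc 1 k,
      ((-1:ℝ) ^ p / p) * ((fwdDiff (-σ))^[p] (fun z : ℝ => z ^ m)) y :=
    fun σ => Finset.sum_congr rfl fun p _ => by rw [fwdDiff_iter_pow_apply]
  have hder : ∀ σ : ℝ, HasDerivAt F ((m:ℝ) * y ^ (m - 1)) σ := by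
    intro σ
    have hterm : ∀ p ∈ Finset.Icc 1 k, HasDerivAt
        (fun σ' => ((-1:ℝ) ^ p / p) *
          ∑ i ∈ range (p + 1), ((-1:ℝ) ^ (p - i) * (p.choose i)) * (y - i * σ') ^ m)
        (((-1:ℝ) ^ p / p) *
          ∑ i ∈ range (p + 1), ((-1:ℝ) ^ (p - i) * (p.choose i)) *
            ((m:ℝ) * (y - i * σ) ^ (m - 1) * (-(i:ℝ)))) σ := by
      intro p _
      refine HasDerivAt.const_mul _ (HasDerivAt.fun_sum fun i _ => HasDerivAt.const_mul _ ?_)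
      have hinner : HasDerivAt (fun σ' : ℝ => y - i * σ') (-(i:ℝ)) σ := by
        simpa using ((hasDerivAt_id σ).const_mul (i:ℝ)).const_sub y
      exact (hinner.pow m).congr_deriv (by ring)
    have hsum := HasDerivAt.fun_sum hterm
    have hval : ∑ p ∈ Finset.Icc 1 k, ((-1:ℝ) ^ p / p) *
          ∑ i ∈ range (p + 1), ((-1:ℝ) ^ (p - i) * (p.choose i)) *
            ((m:ℝ) * (y - i * σ) ^ (m - 1) * (-(i:ℝ)))
        = (m:ℝ) * y ^ (m - 1) := by
      have hptrans : ∀ p ∈ Finset.Icc 1 k, ((-1:ℝ) ^ p / p) *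
          ∑ i ∈ range (p + 1), ((-1:ℝ) ^ (p - i) * (p.choose i)) *
            ((m:ℝ) * (y - i * σ) ^ (m - 1) * (-(i:ℝ)))
          = (m:ℝ) * ((-1:ℝ) ^ (p-1) *
              ((fwdDiff (-σ))^[p-1] (fun z : ℝ => z ^ (m-1))) (y - σ)) := by
        intro p hp
        obtain ⟨hp1, hpk⟩ := Finset.mem_Icc.mp hp
        rw [Finset.sum_range_succ']
        simp only [Nat.cast_zero, neg_zero, mul_zero, zero_mul, sub_zero, add_zero]
        have hstep : ∀ i ∈ range p,
            ((-1:ℝ) ^ (p - (i+1)) * (p.choose (i+1))) *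
              ((m:ℝ) * (y - ((i+1:ℕ):ℝ) * σ) ^ (m - 1) * (-((i+1:ℕ):ℝ)))
            = (-(m:ℝ) * p) * (((-1:ℝ) ^ ((p-1) - i) * ((p-1).choose i)) *
                ((y - σ) - i * σ) ^ (m - 1)) := by
          intro i hi
          have hch : ((p.choose (i+1)) : ℝ) * ((i:ℝ)+1) = (p:ℝ) * ((p-1).choose i) := by
            have h := Nat.add_one_mul_choose_eq (p-1) i
            have hp' : p - 1 + 1 = p := by omega
            simp only [Nat.succ_eq_add_one, hp'] at h
            have h' : (p:ℝ) * ((p-1).choose i) = (p.choose (i+1) : ℝ) * ((i:ℝ)+1) := by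
              exact_mod_cast h
            linear_combination -h'
          have hsub : p - (i+1) = (p-1) - i := by omega
          have hpt : (y - ((i+1:ℕ):ℝ) * σ) = (y - σ) - i * σ := by push_cast; ring
          rw [hsub, hpt]
          push_cast
          linear_combination (-((-1:ℝ)^((p-1)-i) * (m:ℝ) * ((y-σ)-i*σ)^(m-1))) * hch
        rw [Finset.sum_congr rfl hstep, ← Finset.mul_sum]
        have happ := fwdDiff_iter_pow_apply σ (m-1) (p-1) (y - σ)
        rw [show p - 1 + 1 = p from by omega] at happ
        rw [← happ]
        have hpow : (-1:ℝ)^p = -(-1:ℝ)^(p-1) := by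
          conv_lhs => rw [show p = (p-1)+1 from by omega]
          rw [pow_succ]; ring
        have hpne : (p:ℝ) ≠ 0 := by positivity
        rw [hpow]
        field_simp
      rw [Finset.sum_congr rfl hptrans, ← Finset.mul_sum]
      have hre : ∑ p ∈ Finset.Icc 1 k, ((-1:ℝ) ^ (p-1) *
            ((fwdDiff (-σ))^[p-1] (fun z : ℝ => z ^ (m-1))) (y - σ))
          = ∑ q ∈ range k, ((-1:ℝ) ^ q *
            ((fwdDiff (-σ))^[q] (fun z : ℝ => z ^ (m-1))) (y - σ)) := by
        rw [show Finset.Icc 1 k = Finset.Ico 1 (k+1) by rw [Finset.Ico_add_one_right_eq_Icc], Finset.sum_Ico_eq_sum_range]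
        exact Finset.sum_congr (by congr 1) fun q _ => by
          simp [Nat.add_sub_cancel_left, Nat.add_sub_cancel]
      rw [hre, telescope_fwdDiff σ _ k (fwdDiff_iter_pow_eq_zero (-σ) (m-1) k (by omega)) y]
    exact hval ▸ hsum
  -- F has constant derivative, F 0 = 0
  have hF0 : F 0 = 0 := by
    refine Finset.sum_eq_zero fun p hp => ?_
    have hp1 : 1 ≤ p := (Finset.mem_Icc.mp hp).1
    have : ∑ i ∈ range (p + 1), ((-1:ℝ) ^ (p - i) * (p.choose i)) * (y - i * 0) ^ m
        = (∑ i ∈ range (p + 1), (-1:ℝ) ^ (p - i) * (p.choose i)) * y ^ m := by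
      rw [Finset.sum_mul]
      exact Finset.sum_congr rfl fun i _ => by ring_nf
    rw [this, alt_sum_choose_pow p hp1, zero_mul, mul_zero]
  have hconst : ∀ σ : ℝ, F σ - (m:ℝ) * y^(m-1) * σ = F 0 - (m:ℝ) * y^(m-1) * 0 := by
    intro σ
    have hd : ∀ x : ℝ, HasDerivAt (fun σ' => F σ' - (m:ℝ) * y^(m-1) * σ') 0 x := by
      intro x
      have := (hder x).sub ((hasDerivAt_id x).const_mul ((m:ℝ) * y^(m-1)))
      exact this.congr_deriv (by simp)
    exact is_const_of_deriv_eq_zero (fun x => (hd x).differentiableAt)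
      (fun x => (hd x).deriv) σ 0
  have := hconst τ
  rw [hF0] at this
  have hFτ : F τ = (m:ℝ) * y^(m-1) * τ := by linarith
  rw [← hFeq τ, hFτ]
  ring

open Polynomial in
lemma delta_moments (k : ℕ) (δc : ℕ → ℝ)
    (hδ : ∀ ζ : ℂ, ∑ j ∈ Finset.range (k + 1), (δc j : ℂ) * ζ ^ j
        = ∑ ℓ ∈ Finset.Icc 1 k, ((ℓ : ℂ))⁻¹ * (1 - ζ) ^ ℓ) :
    ∀ p, ∑ j ∈ range (k + 1), δc j * (j.choose p : ℝ)
      = if p ∈ Finset.Icc 1 k then (-1:ℝ)^p / p else 0 := by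
  intro p
  set P : ℂ[X] := ∑ j ∈ range (k + 1), C (δc j : ℂ) * (X + 1) ^ j with hP
  set Q : ℂ[X] := ∑ ℓ ∈ Finset.Icc 1 k, C ((-1:ℂ)^ℓ * (ℓ:ℂ)⁻¹) * X ^ ℓ with hQ
  have hPQ : P = Q := by
    apply Polynomial.funext
    intro z
    have h := hδ (z + 1)
    simp only [hP, hQ, eval_finset_sum, eval_mul, eval_C, eval_pow, eval_add, eval_X, eval_one]
    rw [h]
    refine Finset.sum_congr rfl fun ℓ _ => ?_
    have : (1 : ℂ) - (z + 1) = -z := by ring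
    rw [this]
    rw [neg_pow]
    ring
  have hcoeff := congrArg (fun r => Polynomial.coeff r p) hPQ
  simp only [hP, hQ, Polynomial.finset_sum_coeff, Polynomial.coeff_C_mul,
    Polynomial.coeff_X_pow, Polynomial.coeff_X_add_one_pow] at hcoeff
  have hL : ∑ j ∈ range (k+1), (δc j : ℂ) * (j.choose p : ℂ)
      = ((∑ j ∈ range (k+1), δc j * (j.choose p : ℝ) : ℝ) : ℂ) := by push_cast; rfl
  have hR : ∑ ℓ ∈ Finset.Icc 1 k, (-1:ℂ)^ℓ * (ℓ:ℂ)⁻¹ * (if p = ℓ then 1 else 0)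
      = ((if p ∈ Finset.Icc 1 k then (-1:ℝ)^p / p else 0 : ℝ) : ℂ) := by
    simp only [mul_ite, mul_one, mul_zero]
    rw [Finset.sum_ite_eq (Finset.Icc 1 k) p (fun ℓ => (-1:ℂ)^ℓ * (ℓ:ℂ)⁻¹)]
    split_ifs with hmem
    · push_cast; ring
    · simp
  rw [hL, hR] at hcoeff
  exact_mod_cast hcoeff

lemma delta_sum_zero (k : ℕ) (hk : 1 ≤ k) (δc : ℕ → ℝ)
    (hδ : ∀ ζ : ℂ, ∑ j ∈ Finset.range (k + 1), (δc j : ℂ) * ζ ^ j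
        = ∑ ℓ ∈ Finset.Icc 1 k, ((ℓ : ℂ))⁻¹ * (1 - ζ) ^ ℓ) :
    ∑ j ∈ range (k + 1), δc j = 0 := by
  have h := hδ 1
  simp only [one_pow, mul_one, sub_self] at h
  have h2 : ∑ ℓ ∈ Finset.Icc 1 k, ((ℓ:ℂ))⁻¹ * (0:ℂ) ^ ℓ = 0 := by
    refine Finset.sum_eq_zero fun ℓ hℓ => ?_
    have : 1 ≤ ℓ := (Finset.mem_Icc.mp hℓ).1
    rw [zero_pow (by omega), mul_zero]
  rw [h2] at h
  exact_mod_cast h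

lemma sum_delta_eval (k : ℕ) (δc : ℕ → ℝ)
    (hδ : ∀ ζ : ℂ, ∑ j ∈ Finset.range (k + 1), (δc j : ℂ) * ζ ^ j
        = ∑ ℓ ∈ Finset.Icc 1 k, ((ℓ : ℂ))⁻¹ * (1 - ζ) ^ ℓ)
    (f : ℝ → ℝ) :
    ∑ j ∈ range (k + 1), δc j * f j
      = ∑ p ∈ Finset.Icc 1 k, ((-1:ℝ)^p / p) * ((fwdDiff (1:ℝ))^[p] f) 0 := by
  have hGN : ∀ j ∈ range (k+1), f j
      = ∑ p ∈ range (k+1), (j.choose p : ℝ) * ((fwdDiff (1:ℝ))^[p] f) 0 := by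
    intro j hj
    have hjk : j ≤ k := by simpa [Nat.lt_succ_iff] using Finset.mem_range.mp hj
    have h := shift_eq_sum_fwdDiff_iter (1:ℝ) f j 0
    have h0 : (0:ℝ) + j • (1:ℝ) = (j:ℝ) := by simp
    rw [h0] at h
    rw [h]
    rw [Finset.sum_subset (Finset.range_subset_range.mpr (by omega : j + 1 ≤ k + 1))]
    · exact Finset.sum_congr rfl fun p _ => by rw [nsmul_eq_mul]
    · intro p _ hp
      simp only [Finset.mem_range, not_lt] at hp
      rw [Nat.choose_eq_zero_of_lt (by omega), zero_smul]
  calc ∑ j ∈ range (k + 1), δc j * f j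
      = ∑ j ∈ range (k+1), ∑ p ∈ range (k+1),
          δc j * ((j.choose p : ℝ) * ((fwdDiff (1:ℝ))^[p] f) 0) := by
        refine Finset.sum_congr rfl fun j hj => ?_
        rw [hGN j hj, Finset.mul_sum]
    _ = ∑ p ∈ range (k+1), (∑ j ∈ range (k+1), δc j * (j.choose p : ℝ))
          * ((fwdDiff (1:ℝ))^[p] f) 0 := by
        rw [Finset.sum_comm]
        refine Finset.sum_congr rfl fun p _ => ?_
        rw [Finset.sum_mul]
        exact Finset.sum_congr rfl fun j _ => by ring
    _ = ∑ p ∈ range (k+1), (if p ∈ Finset.Icc 1 k then (-1:ℝ)^p / p else 0)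
          * ((fwdDiff (1:ℝ))^[p] f) 0 := by
        exact Finset.sum_congr rfl fun p _ => by rw [delta_moments k δc hδ p]
    _ = ∑ p ∈ Finset.Icc 1 k, ((-1:ℝ)^p / p) * ((fwdDiff (1:ℝ))^[p] f) 0 := by
        simp only [ite_mul, zero_mul]
        rw [← Finset.sum_filter]
        refine Finset.sum_congr ?_ fun p _ => rfl
        ext p
        simp only [Finset.mem_filter, Finset.mem_range, Finset.mem_Icc, Nat.lt_succ_iff]
        omega

lemma delta_pow_eval (k : ℕ) (δc : ℕ → ℝ)
    (hδ : ∀ ζ : ℂ, ∑ j ∈ Finset.range (k + 1), (δc j : ℂ) * ζ ^ j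
        = ∑ ℓ ∈ Finset.Icc 1 k, ((ℓ : ℂ))⁻¹ * (1 - ζ) ^ ℓ)
    (m : ℕ) (hm1 : 1 ≤ m) (hmk : m ≤ k) (y τ : ℝ) :
    ∑ j ∈ range (k + 1), δc j * (y - j * τ) ^ m = m * τ * y ^ (m - 1) := by
  have h := sum_delta_eval k δc hδ (fun x => (y - τ * x) ^ m)
  have h1 : ∑ j ∈ range (k + 1), δc j * (y - j * τ) ^ m
      = ∑ j ∈ range (k + 1), δc j * (y - τ * (j:ℝ)) ^ m := by
    exact Finset.sum_congr rfl fun j _ => by ring_nf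
  rw [h1, h]
  have h2 : ∀ p ∈ Finset.Icc 1 k, ((-1:ℝ)^p / p) * ((fwdDiff (1:ℝ))^[p] (fun x => (y - τ * x) ^ m)) 0
      = ((-1:ℝ)^p / p) * ((fwdDiff (-τ))^[p] (fun z : ℝ => z ^ m)) y := by
    intro p _
    rw [fwdDiff_comp_affine τ y p (fun z : ℝ => z ^ m)]
    norm_num
  rw [Finset.sum_congr rfl h2, core_identity k m hm1 hmk y τ]

lemma taylor_banach {X : Type*} [NormedAddCommGroup X] [NormedSpace ℝ X] [CompleteSpace X]
    (a b : ℝ) (hab : a ≤ b) (n : ℕ) (v : ℕ → ℝ → X)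
    (hd : ∀ m < n + 1, ∀ s ∈ Icc a b, HasDerivWithinAt (v m) (v (m + 1) s) (Icc a b) s)
    (hc : ContinuousOn (v (n + 1)) (Icc a b)) :
    ∀ x ∈ Icc a b, v 0 x = (∑ m ∈ Finset.range (n + 1), ((x - a) ^ m / m.factorial) • v m a)
      + ((n.factorial : ℝ))⁻¹ • ∫ s in a..x, (x - s) ^ n • v (n + 1) s := by
  induction n with
  | zero =>
    intro x hx
    obtain ⟨hax, hxb⟩ := hx
    have hcont0 : ContinuousOn (v 0) (Icc a b) :=
      fun s hs => (hd 0 (by omega) s hs).continuousWithinAt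
    have hFTC : ∫ s in a..x, v (0 + 1) s = v 0 x - v 0 a := by
      apply integral_eq_sub_of_hasDeriv_right_of_le hax
        (hcont0.mono (Icc_subset_Icc le_rfl hxb))
      · intro s hs
        have hs' : s ∈ Icc a b := ⟨le_of_lt hs.1, le_trans (le_of_lt hs.2) hxb⟩
        exact ((hd 0 (by omega) s hs').hasDerivAt
          (Icc_mem_nhds hs.1 (lt_of_lt_of_le hs.2 hxb))).hasDerivWithinAt
      · exact (hc.mono (by rw [uIcc_of_le hax]; exact Icc_subset_Icc le_rfl hxb)).intervalIntegrable
    have hEq : (∫ s in a..x, (x - s) ^ (0:ℕ) • v (0 + 1) s) = ∫ s in a..x, v (0 + 1) s :=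
      intervalIntegral.integral_congr fun s _ => by simp
    have hsum : ∑ m ∈ Finset.range (0 + 1), ((x - a) ^ m / (m.factorial : ℝ)) • v m a
        = v 0 a := by simp
    rw [hEq, hFTC, hsum]
    simp only [Nat.factorial_zero, Nat.cast_one, inv_one, one_smul]
    abel
  | succ n IH =>
    intro x hx
    obtain ⟨hax, hxb⟩ := hx
    have hc' : ContinuousOn (v (n + 1)) (Icc a b) :=
      fun s hs => (hd (n+1) (by omega) s hs).continuousWithinAt
    have hIH := IH (fun m hm => hd m (by omega)) hc' x ⟨hax, hxb⟩
    set I : X := ∫ s in a..x, (x - s) ^ n • v (n + 1) s with hI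
    set I1 : X := ∫ s in a..x, (x - s) ^ (n + 1) • v (n + 1 + 1) s with hI1
    set A : X := (x - a) ^ (n + 1) • v (n + 1) a with hA
    set c : ℝ := (n : ℝ) + 1 with hc''
    have hintg1 : IntervalIntegrable (fun s => (x - s) ^ (n+1) • v (n+1+1) s) volume a x := by
      apply ContinuousOn.intervalIntegrable
      rw [uIcc_of_le hax]
      exact (((continuous_const.sub continuous_id).pow (n+1)).continuousOn).smul
        (hc.mono (Icc_subset_Icc le_rfl hxb))
    have hintg2 : IntervalIntegrable (fun s => (-c * (x - s) ^ n) • v (n+1) s) volume a x := by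
      apply ContinuousOn.intervalIntegrable
      rw [uIcc_of_le hax]
      exact ((continuous_const.mul ((continuous_const.sub continuous_id).pow n)).continuousOn).smul
        (hc'.mono (Icc_subset_Icc le_rfl hxb))
    have hFTC : ∫ s in a..x,
        ((x - s) ^ (n+1) • v (n+1+1) s + (-c * (x - s) ^ n) • v (n+1) s)
        = (0 : X) - A := by
      have hkey := integral_eq_sub_of_hasDeriv_right_of_le
        (f := fun s => (x - s) ^ (n+1) • v (n+1) s)
        (f' := fun s => (x - s) ^ (n+1) • v (n+1+1) s + (-c * (x - s) ^ n) • v (n+1) s)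
        hax
        ((((continuous_const.sub continuous_id).pow (n+1)).continuousOn).smul
          ((hc'.mono (Icc_subset_Icc le_rfl hxb))))
        ?_ ?_
      · rw [hkey]
        congr 1
        simp
      · intro s hs
        have hs' : s ∈ Icc a b := ⟨le_of_lt hs.1, le_trans (le_of_lt hs.2) hxb⟩
        have hv : HasDerivAt (v (n+1)) (v (n+1+1) s) s :=
          (hd (n+1) (by omega) s hs').hasDerivAt
            (Icc_mem_nhds hs.1 (lt_of_lt_of_le hs.2 hxb))
        have h1 : HasDerivAt (fun s' : ℝ => x - s') (-1 : ℝ) s := by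
          simpa using (hasDerivAt_id s).const_sub x
        have hsc : HasDerivAt (fun s' : ℝ => (x - s') ^ (n+1)) (-c * (x - s) ^ n) s := by
          have h2 := h1.pow (n+1)
          refine h2.congr_deriv ?_
          rw [hc'']
          push_cast [Nat.add_sub_cancel]
          ring
        exact (hsc.smul hv).hasDerivWithinAt
      · exact hintg1.add hintg2
    
    have hsplit : (∫ s in a..x,
        ((x - s) ^ (n+1) • v (n+1+1) s + (-c * (x - s) ^ n) • v (n+1) s))
        = I1 + (-c) • I := by
      rw [integral_add hintg1 hintg2, hI1, hI]
      congr 1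
      rw [← intervalIntegral.integral_smul]
      exact integral_congr fun s _ => by rw [smul_smul]
    rw [hsplit, zero_sub] at hFTC
    have h2 : c • I = A + I1 := by
      have h3 : c • I = I1 - (I1 + -c • I) := by rw [neg_smul]; abel
      rw [h3, hFTC]
      abel
    have hcne : c ≠ 0 := by rw [hc'']; positivity
    have hsolve : I = c⁻¹ • (A + I1) := by rw [← h2, inv_smul_smul₀ hcne]
    have hfacinv : ((n.factorial : ℝ))⁻¹ * c⁻¹ = (((n+1).factorial : ℝ))⁻¹ := by
      rw [Nat.factorial_succ, hc'']
      push_cast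
      rw [mul_inv]
      ring
    have hfac : ((n.factorial : ℝ))⁻¹ • (c⁻¹ • (A + I1))
        = ((x - a) ^ (n+1) / (((n+1).factorial : ℝ))) • v (n+1) a
          + (((n+1).factorial : ℝ))⁻¹ • I1 := by
      rw [smul_smul, hfacinv, smul_add, hA, smul_smul]
      congr 2
      rw [div_eq_mul_inv]
      ring
    rw [Finset.sum_range_succ, hIH, hsolve, hfac]
    exact (add_assoc _ _ _).symm

end BDFAuxiliary

section Main
open Finset

/-- **Exact Peano-kernel representation of the BDF consistency defect.**
If `u : ℝ → X` is `(k+1)`-times continuously differentiable on `[t-kτ, t]`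
(with `u m` denoting the `m`-th derivative of `u 0`), then the BDF defect
`d = (1/τ) ∑_{j=0}^k δ_j u(t-jτ) - u'(t)` equals
`(1/k!) [ (1/τ) ∑_{j=0}^k δ_j ∫_{t-kτ}^{t-jτ} (t-jτ-s)^k u^{(k+1)}(s) ds
          - k ∫_{t-kτ}^{t} (t-s)^{k-1} u^{(k+1)}(s) ds ]`. -/
theorem bdf_defect_representation (k : ℕ) (hk : 1 ≤ k)
    (δc : ℕ → ℝ)
    (hδ : ∀ ζ : ℂ, ∑ j ∈ Finset.range (k + 1), (δc j : ℂ) * ζ ^ j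
        = ∑ ℓ ∈ Finset.Icc 1 k, ((ℓ : ℂ))⁻¹ * (1 - ζ) ^ ℓ)
    (X : Type*) [NormedAddCommGroup X] [NormedSpace ℝ X] [CompleteSpace X]
    (t τ : ℝ) (hτ : 0 < τ)
    (u : ℕ → ℝ → X)
    (hderiv : ∀ m < k + 1, ∀ s ∈ Icc (t - k * τ) t,
      HasDerivWithinAt (u m) (u (m + 1) s) (Icc (t - k * τ) t) s)
    (hcont : ContinuousOn (u (k + 1)) (Icc (t - k * τ) t)) :
    (1 / τ) • ∑ j ∈ Finset.range (k + 1), δc j • u 0 (t - j * τ) - u 1 t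
    = ((k.factorial : ℝ))⁻¹ •
        ((1 / τ) • ∑ j ∈ Finset.range (k + 1),
            δc j • (∫ s in (t - k * τ)..(t - j * τ), (t - j * τ - s) ^ k • u (k + 1) s)
          - (k : ℝ) • ∫ s in (t - k * τ)..t, (t - s) ^ (k - 1) • u (k + 1) s) := by
  set a : ℝ := t - k * τ with ha
  have hat : a ≤ t := by
    rw [ha]
    have : 0 ≤ (k:ℝ) * τ := by positivity
    linarith
  have hk1 : k - 1 + 1 = k := by omega
  -- Taylor for u 0 at the points t - j τ
  have hT := taylor_banach a t hat k u hderiv hcont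
  -- Taylor for u 1 (shifted family) at t
  have hd' : ∀ m < (k - 1) + 1, ∀ s ∈ Icc a t,
      HasDerivWithinAt (u (m+1)) (u (m+1+1) s) (Icc a t) s := by
    intro m hm s hs
    exact hderiv (m+1) (by omega) s hs
  have hc' : ContinuousOn (u ((k-1) + 1 + 1)) (Icc a t) := by rw [hk1]; exact hcont
  have hT1 := taylor_banach a t hat (k-1) (fun m => u (m+1)) hd' hc' t
    ⟨hat, le_rfl⟩
  rw [hk1] at hT1
  -- shorthand
  set J : X := ∫ s in a..t, (t - s) ^ (k-1) • u (k + 1) s with hJ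
  set I : ℕ → X := fun j => ∫ s in a..(t - j * τ), (t - j * τ - s) ^ k • u (k + 1) s with hI
  -- expand each u 0 (t - j τ)
  have hTj : ∀ j ∈ range (k+1), u 0 (t - j * τ)
      = (∑ m ∈ range (k + 1), (((t - j*τ) - a) ^ m / m.factorial) • u m a)
        + ((k.factorial : ℝ))⁻¹ • I j := by
    intro j hj
    have hjk : (j:ℝ) ≤ (k:ℝ) := by
      have : j ≤ k := by simpa [Nat.lt_succ_iff] using Finset.mem_range.mp hj
      exact_mod_cast this
    have hmem : t - j * τ ∈ Icc a t := by
      constructor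
      · rw [ha]; nlinarith
      · have : (0:ℝ) ≤ j := Nat.cast_nonneg j
        nlinarith
    exact hT (t - j * τ) hmem
  have hτne : τ ≠ 0 := ne_of_gt hτ
  have hta : t - a = (k:ℝ) * τ := by rw [ha]; ring
  have hyj : ∀ j : ℕ, (t - j * τ) - a = (k:ℝ) * τ - j * τ := fun j => by rw [ha]; ring
  -- split the δ-weighted sum of Taylor expansions
  have hsplit : ∑ j ∈ range (k+1), δc j • u 0 (t - j * τ)
      = (∑ m ∈ range (k+1),
          (∑ j ∈ range (k+1), δc j * (((t - j*τ) - a) ^ m / m.factorial)) • u m a)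
        + ((k.factorial : ℝ))⁻¹ • ∑ j ∈ range (k+1), δc j • I j := by
    rw [Finset.sum_congr rfl (fun j hj => by
      rw [hTj j hj, smul_add])]
    rw [Finset.sum_add_distrib]
    congr 1
    · have hswap : ∀ j ∈ range (k+1), δc j • (∑ m ∈ range (k + 1),
          (((t - j*τ) - a) ^ m / (m.factorial : ℝ)) • u m a)
          = ∑ m ∈ range (k+1), (δc j * (((t - j*τ) - a) ^ m / m.factorial)) • u m a := by
        intro j _
        rw [Finset.smul_sum]
        exact Finset.sum_congr rfl fun m _ => smul_smul _ _ _
      rw [Finset.sum_congr rfl hswap, Finset.sum_comm]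
      exact Finset.sum_congr rfl fun m _ => by rw [← Finset.sum_smul]
    · rw [Finset.smul_sum]
      refine Finset.sum_congr rfl fun j _ => ?_
      rw [smul_comm]
  -- the polynomial part reproduces the Taylor expansion of u 1 t
  have hpoly : (1/τ) • (∑ m ∈ range (k+1),
        (∑ j ∈ range (k+1), δc j * (((t - j*τ) - a) ^ m / m.factorial)) • u m a)
      = ∑ m ∈ range k, (((k:ℝ)*τ) ^ m / m.factorial) • u (m+1) a := by
    rw [Finset.smul_sum]
    rw [Finset.sum_congr rfl (fun m _ => (smul_smul (1/τ) _ (u m a)))]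
    rw [Finset.sum_range_succ']
    have h0 : (1/τ * ∑ j ∈ range (k+1), δc j * (((t - j*τ) - a) ^ 0 / (Nat.factorial 0))) •
        u 0 a = 0 := by
      have : ∑ j ∈ range (k+1), δc j * (((t - j*τ) - a) ^ 0 / (Nat.factorial 0))
          = ∑ j ∈ range (k+1), δc j := by
        refine Finset.sum_congr rfl fun j _ => by norm_num
      rw [this, delta_sum_zero k hk δc hδ, mul_zero, zero_smul]
    rw [h0, add_zero]
    refine Finset.sum_congr rfl fun i hi => ?_
    have hik : i < k := Finset.mem_range.mp hi
    have hq : ∑ j ∈ range (k+1), δc j * (((t - j*τ) - a) ^ (i+1) / ((i+1).factorial : ℝ))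
        = (((i+1:ℕ):ℝ) * τ * ((k:ℝ)*τ) ^ i) / ((i+1).factorial : ℝ) := by
      have : ∀ j ∈ range (k+1), δc j * (((t - j*τ) - a) ^ (i+1) / ((i+1).factorial : ℝ))
          = (δc j * (((k:ℝ)*τ - j*τ) ^ (i+1))) / ((i+1).factorial : ℝ) := by
        intro j _
        rw [hyj j, mul_div_assoc]
      rw [Finset.sum_congr rfl this, ← Finset.sum_div]
      rw [delta_pow_eval k δc hδ (i+1) (by omega) (by omega) ((k:ℝ)*τ) τ]
      norm_num
    rw [hq]
    congr 1
    have hfacne : ((i.factorial : ℝ)) ≠ 0 := by positivity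
    rw [Nat.factorial_succ]
    push_cast
    field_simp
  -- value of the k-fold factorial ratio
  have hkfac : ((k.factorial : ℝ))⁻¹ * (k:ℝ) = (((k-1).factorial : ℝ))⁻¹ := by
    have h : (k.factorial : ℝ) = (k:ℝ) * ((k-1).factorial : ℝ) := by
      conv_lhs => rw [show k = (k-1)+1 from by omega]
      rw [Nat.factorial_succ]
      push_cast [hk1]
      ring
    have h1 : ((k-1).factorial : ℝ) ≠ 0 := by positivity
    have h2 : (k:ℝ) ≠ 0 := by positivity
    rw [h, mul_inv]
    field_simp
  -- put everything together
  rw [hsplit, smul_add, hpoly]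
  have hu1 : u 1 t = (∑ m ∈ range k, (((k:ℝ)*τ) ^ m / m.factorial) • u (m+1) a)
      + (((k-1).factorial : ℝ))⁻¹ • J := by
    rw [← hta]
    exact hT1
  rw [hu1]
  have hcomm : (1/τ) • (((k.factorial : ℝ))⁻¹ • ∑ j ∈ range (k+1), δc j • I j)
      = ((k.factorial : ℝ))⁻¹ • ((1/τ) • ∑ j ∈ range (k+1), δc j • I j) := smul_comm _ _ _
  rw [hcomm]
  rw [smul_sub]
  have hJ2 : ((k.factorial : ℝ))⁻¹ • ((k:ℝ) • J) = (((k-1).factorial : ℝ))⁻¹ • J := by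
    rw [smul_smul, hkfac]
  rw [hJ2]
  abel

end Main
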